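/- A puzzle P is a strong uniquely solvable puzzle if and only if the tripartite 3-hypergraph H_P has no non-trivial 3D matching. -/
import Mathlib


/-- Exactly two of the three propositions hold. -/
def ExactlyTwo (A B C : Prop) : Prop :=
  (A ∧ B ∧ ¬C) ∨ (A ∧ ¬B ∧ C) ∨ (¬A ∧ B ∧ C)

/-- At least two of the three propositions hold. -/
def AtLeastTwo (A B C : Prop) : Prop :=
  (A ∧ B) ∨ (A ∧ C) ∨ (B ∧ C)

/-- A puzzle of width `k` is a finite set of rows in `{1,2,3}^k`; we use the
alphabet `Fin 3` whose three elements are denoted `1`, `2`, `3` (`3 = 0`).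
`P` is a strong uniquely solvable puzzle (strong USP). -/
def IsSUSP {k : ℕ} (P : Finset (Fin k → Fin 3)) : Prop :=
  ∀ π₁ π₂ π₃ : Equiv.Perm {r // r ∈ P},
    (π₁ = π₂ ∧ π₂ = π₃) ∨
    ∃ (r : {r // r ∈ P}) (c : Fin k),
      ExactlyTwo ((π₁ r).1 c = 1) ((π₂ r).1 c = 2) ((π₃ r).1 c = 3)

/-- A puzzle `P` is a strong USP iff the tripartite 3-hypergraph `H_P`
(whose edges are the triples `(a,b,c) ∈ P³` such that no column witnesses the
"exactly two" condition) has no non-trivial 3D matching. -/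
theorem susp_iff_no_nontrivial_3dm {k : ℕ} (P : Finset (Fin k → Fin 3)) :
    IsSUSP P ↔
      ¬ ∃ M : Finset ((Fin k → Fin 3) × (Fin k → Fin 3) × (Fin k → Fin 3)),
        (∀ e ∈ M, e.1 ∈ P ∧ e.2.1 ∈ P ∧ e.2.2 ∈ P ∧
          ∀ c : Fin k, ¬ ExactlyTwo (e.1 c = 1) (e.2.1 c = 2) (e.2.2 c = 3)) ∧
        M.card = P.card ∧
        (∀ e₁ ∈ M, ∀ e₂ ∈ M, e₁ ≠ e₂ →
          e₁.1 ≠ e₂.1 ∧ e₁.2.1 ≠ e₂.2.1 ∧ e₁.2.2 ≠ e₂.2.2) ∧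
        M ≠ P.image (fun r => (r, r, r)) := by
  classical
  constructor
  · rintro hS ⟨M, hM, hcard, hdisj, hne⟩
    have hinj1 : ∀ e₁ ∈ M, ∀ e₂ ∈ M, e₁.1 = e₂.1 → e₁ = e₂ := by
      intro e₁ h₁ e₂ h₂ h
      by_contra hne'
      exact (hdisj e₁ h₁ e₂ h₂ hne').1 h
    have him : M.image Prod.fst = P := by
      apply Finset.eq_of_subset_of_card_le
      · intro x hx
        obtain ⟨e, he, rfl⟩ := Finset.mem_image.mp hx
        exact (hM e he).1
      · rw [Finset.card_image_of_injOn hinj1, hcard]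
    have hex : ∀ r : {r // r ∈ P}, ∃ e, e ∈ M ∧ e.1 = r.1 := by
      intro r
      have : r.1 ∈ M.image Prod.fst := him ▸ r.2
      obtain ⟨e, he, h⟩ := Finset.mem_image.mp this
      exact ⟨e, he, h⟩
    choose E hEM hE1 using hex
    set σ : {r // r ∈ P} → {r // r ∈ P} := fun r => ⟨(E r).2.1, (hM _ (hEM r)).2.1⟩ with hσdef
    set τ : {r // r ∈ P} → {r // r ∈ P} := fun r => ⟨(E r).2.2, (hM _ (hEM r)).2.2.1⟩ with hτdef
    have hEinj : ∀ r r', E r = E r' → r = r' := by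
      intro r r' h
      apply Subtype.ext
      rw [← hE1 r, ← hE1 r', h]
    have hσinj : Function.Injective σ := by
      intro r r' h
      apply hEinj
      by_contra hne'
      have : E r ≠ E r' := fun hh => hne' hh
      exact (hdisj _ (hEM r) _ (hEM r') this).2.1 (congrArg Subtype.val h)
    have hτinj : Function.Injective τ := by
      intro r r' h
      apply hEinj
      by_contra hne'
      have : E r ≠ E r' := fun hh => hne' hh
      exact (hdisj _ (hEM r) _ (hEM r') this).2.2 (congrArg Subtype.val h)
    rcases hS 1 (Equiv.ofBijective σ (Finite.injective_iff_bijective.mp hσinj))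
        (Equiv.ofBijective τ (Finite.injective_iff_bijective.mp hτinj)) with h | ⟨r, c, hw⟩
    · -- M is the trivial matching
      apply hne
      have hfix : ∀ r : {r // r ∈ P}, σ r = r ∧ τ r = r := by
        intro r
        constructor
        · have := congrFun (congrArg (fun (π : Equiv.Perm {r // r ∈ P}) => (π : {r // r ∈ P} → {r // r ∈ P})) h.1) r
          simpa [Equiv.ofBijective] using this.symm
        · have h2 := h.1.trans h.2
          have := congrFun (congrArg (fun (π : Equiv.Perm {r // r ∈ P}) => (π : {r // r ∈ P} → {r // r ∈ P})) h2) r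
          simpa [Equiv.ofBijective] using this.symm
      apply Finset.eq_of_subset_of_card_le
      · intro e he
        have he1 : e.1 ∈ P := (hM e he).1
        set r : {r // r ∈ P} := ⟨e.1, he1⟩ with hr
        have hEe : E r = e := hinj1 _ (hEM r) _ he (hE1 r)
        have h21 : e.2.1 = e.1 := by
          have := congrArg Subtype.val (hfix r).1
          simpa [hσdef, hEe] using this
        have h22 : e.2.2 = e.1 := by
          have := congrArg Subtype.val (hfix r).2
          simpa [hτdef, hEe] using this
        apply Finset.mem_image.mpr
        exact ⟨e.1, he1, by simp [Prod.ext_iff, h21, h22]⟩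
      · rw [hcard]
        apply Finset.card_image_le.trans_eq rfl
    · -- witness contradicts edge condition
      have hedge := (hM _ (hEM r)).2.2.2 c
      apply hedge
      have h1 : (E r).1 c = r.1 c := by rw [hE1 r]
      simpa [Equiv.ofBijective, hσdef, hτdef, h1] using hw
  · intro hno π₁ π₂ π₃
    by_contra hcon
    push_neg at hcon
    obtain ⟨hne, hnw⟩ := hcon
    apply hno
    set f : {r // r ∈ P} → (Fin k → Fin 3) × (Fin k → Fin 3) × (Fin k → Fin 3) :=
      fun r => ((π₁ r).1, (π₂ r).1, (π₃ r).1) with hfdef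
    have hfinj : Function.Injective f := by
      intro r r' h
      have : (π₁ r).1 = (π₁ r').1 := congrArg Prod.fst h
      exact π₁.injective (Subtype.ext this)
    refine ⟨Finset.univ.image f, ?_, ?_, ?_, ?_⟩
    · intro e he
      obtain ⟨r, _, rfl⟩ := Finset.mem_image.mp he
      exact ⟨(π₁ r).2, (π₂ r).2, (π₃ r).2, fun c => hnw r c⟩
    · rw [Finset.card_image_of_injective _ hfinj, Finset.card_univ, Fintype.card_coe]
    · intro e₁ h₁ e₂ h₂ hne'
      obtain ⟨r₁, _, rfl⟩ := Finset.mem_image.mp h₁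
      obtain ⟨r₂, _, rfl⟩ := Finset.mem_image.mp h₂
      have hr : r₁ ≠ r₂ := fun h => hne' (by rw [h])
      refine ⟨?_, ?_, ?_⟩
      · exact fun h => hr (π₁.injective (Subtype.ext h))
      · exact fun h => hr (π₂.injective (Subtype.ext h))
      · exact fun h => hr (π₃.injective (Subtype.ext h))
    · have key : ∃ r : {r // r ∈ P}, (π₁ r).1 ≠ (π₂ r).1 ∨ (π₂ r).1 ≠ (π₃ r).1 := by
        by_cases h12 : π₁ = π₂
        · by_contra hc
          push_neg at hc
          exact hne h12 (Equiv.ext fun r => Subtype.ext (hc r).2)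
        · by_contra hc
          push_neg at hc
          exact h12 (Equiv.ext fun r => Subtype.ext (hc r).1)
      obtain ⟨r, hr⟩ := key
      intro heq
      have hmem : f r ∈ P.image (fun r => (r, r, r)) := by
        rw [← heq]
        exact Finset.mem_image.mpr ⟨r, Finset.mem_univ r, rfl⟩
      obtain ⟨s, _, hs⟩ := Finset.mem_image.mp hmem
      have h1 : s = (π₁ r).1 := congrArg Prod.fst hs
      have h2 : s = (π₂ r).1 := congrArg (fun e => e.2.1) hs
      have h3 : s = (π₃ r).1 := congrArg (fun e => e.2.2) hs
      rcases hr with h | h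
      · exact h (h1 ▸ h2)
      · exact h (h2 ▸ h3)
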